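/- Let V ⊆ 𝔽₂ᵏ be a binary code such that the weight of every element of V is divisible by 4, and let m be the number of coordinates in the support of V. Then 2 · dim V ≤ m. -/

import Mathlib

open Finset in
private lemma dotForm_aux (ι : Type*) [Fintype ι] :
    ∃ B : LinearMap.BilinForm (ZMod 2) (ι → ZMod 2),
      (∀ x y, B x y = ∑ i, x i * y i) := by
  refine ⟨LinearMap.mk₂ (ZMod 2) (fun x y => ∑ i, x i * y i) ?_ ?_ ?_ ?_, fun _ _ => rfl⟩
  · intro x x' y; simp [add_mul, Finset.sum_add_distrib]
  · intro c x y; simp [Finset.mul_sum, mul_assoc]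
  · intro x y y'; simp [mul_add, Finset.sum_add_distrib]
  · intro c x y; simp [Finset.mul_sum, mul_left_comm]

open scoped Classical in
/-- If `V ⊆ 𝔽₂ᵏ` is a binary code all of whose weights are divisible
by `4`, and `m` is the number of coordinates in the support of `V`, then
`2 · dim V ≤ m`. -/
theorem doubly_even_code_dim_le_half_support (k : ℕ)
    (V : Submodule (ZMod 2) (Fin k → ZMod 2))
    (hV : ∀ v ∈ V, 4 ∣ (Finset.univ.filter fun i => v i ≠ 0).card)
    (m : ℕ)
    (hm : m = (Finset.univ.filter fun i => ∃ v ∈ V, v i ≠ 0).card) :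
    2 * Module.finrank (ZMod 2) V ≤ m := by
  classical
  set S : Finset (Fin k) := Finset.univ.filter (fun i => ∃ v ∈ V, v i ≠ 0) with hS
  have hvS : ∀ v ∈ V, ∀ i, i ∉ S → v i = 0 := by
    intro v hv i hi
    by_contra h
    exact hi (by simp only [hS, Finset.mem_filter, Finset.mem_univ, true_and]; exact ⟨v, hv, h⟩)
  -- key orthogonality: for u v ∈ V, ∑ i, u i * v i = 0 in ZMod 2
  have key : ∀ u ∈ V, ∀ v ∈ V, (∑ i, u i * v i : ZMod 2) = 0 := by
    intro u hu v hv
    set A := Finset.univ.filter (fun i => u i ≠ 0) with hA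
    set B := Finset.univ.filter (fun i => v i ≠ 0) with hB
    set C := Finset.univ.filter (fun i => (u + v) i ≠ 0) with hC
    have hCeq : C = (A ∪ B) \ (A ∩ B) := by
      ext i
      simp only [hC, hA, hB, Finset.mem_sdiff, Finset.mem_union, Finset.mem_inter,
        Finset.mem_filter, Finset.mem_univ, true_and, Pi.add_apply]
      generalize u i = a; generalize v i = b
      revert a b; decide
    have hsub : A ∩ B ⊆ A ∪ B := (Finset.inter_subset_left).trans Finset.subset_union_left
    have hcard : A.card + B.card = C.card + 2 * (A ∩ B).card := by
      have h1 := Finset.card_union_add_card_inter A B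
      have h2 : C.card = (A ∪ B).card - (A ∩ B).card := by
        rw [hCeq, Finset.card_sdiff_of_subset hsub]
      have h3 : (A ∩ B).card ≤ (A ∪ B).card := Finset.card_le_card hsub
      omega
    have h4A := hV u hu
    have h4B := hV v hv
    have h4C := hV (u + v) (V.add_mem hu hv)
    rw [← hA] at h4A; rw [← hB] at h4B; rw [← hC] at h4C
    have heven : 2 ∣ (A ∩ B).card := by omega
    have step1 : (∑ i, u i * v i : ZMod 2) = ∑ i ∈ A ∩ B, u i * v i := by
      refine (Finset.sum_subset (Finset.subset_univ _) ?_).symm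
      intro i _ hi
      have h0 : u i = 0 ∨ v i = 0 := by
        by_contra h
        push_neg at h
        exact hi (by simp only [hA, hB, Finset.mem_inter, Finset.mem_filter, Finset.mem_univ,
          true_and]; exact ⟨h.1, h.2⟩)
      rcases h0 with h | h <;> simp [h]
    have step2 : (∑ i ∈ A ∩ B, u i * v i : ZMod 2) = ((A ∩ B).card : ZMod 2) := by
      have hone : ∀ i ∈ A ∩ B, u i * v i = 1 := by
        intro i hi
        simp only [hA, hB, Finset.mem_inter, Finset.mem_filter, Finset.mem_univ, true_and] at hi
        obtain ⟨ha, hb⟩ := hi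
        revert ha hb; generalize u i = a; generalize v i = b; revert a b; decide
      rw [Finset.sum_congr rfl hone, Finset.sum_const, nsmul_eq_mul, mul_one]
    rw [step1, step2, (ZMod.natCast_eq_zero_iff _ 2).2 heven]
  -- restriction map to the support coordinates
  obtain ⟨B, hBdef⟩ := dotForm_aux (↥S)
  let π : (Fin k → ZMod 2) →ₗ[ZMod 2] (↥S → ZMod 2) :=
    LinearMap.pi (fun i => LinearMap.proj (i : Fin k))
  let f : V →ₗ[ZMod 2] (↥S → ZMod 2) := π.comp V.subtype
  have hf : Function.Injective f := by
    rw [← LinearMap.ker_eq_bot, eq_bot_iff]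
    rintro ⟨v, hv⟩ hker
    have hfv : f ⟨v, hv⟩ = 0 := LinearMap.mem_ker.mp hker
    have h0 : ∀ i : ↥S, v i = 0 := fun i => congrFun hfv i
    have hv0 : v = 0 := by
      funext i
      by_cases hi : i ∈ S
      · exact h0 ⟨i, hi⟩
      · exact hvS v hv i hi
    simp only [Submodule.mem_bot]
    exact Subtype.ext hv0
  set W := LinearMap.range f with hW
  -- restriction preserves the dot product
  have hres : ∀ u ∈ V, ∀ v ∈ V, B (π u) (π v) = ∑ i, u i * v i := by
    intro u hu v hv
    rw [hBdef]
    have h1 : ∑ i : ↥S, (π u) i * (π v) i = ∑ i ∈ S, u i * v i :=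
      Finset.sum_coe_sort S (fun i => u i * v i)
    rw [h1]
    exact Finset.sum_subset (Finset.subset_univ S)
      (fun i _ hi => by rw [hvS u hu i hi, zero_mul])
  have hWorth : W ≤ B.orthogonal W := by
    rintro _ ⟨⟨u, hu⟩, rfl⟩ _ ⟨⟨v, hv⟩, rfl⟩
    show B (π v) (π u) = 0
    rw [hres v hv u hu]
    exact key v hv u hu
  have hrefl : B.IsRefl := by
    intro x y h
    rw [hBdef] at h ⊢
    simpa [mul_comm] using h
  have hnd : B.Nondegenerate := by
    refine ⟨fun x hx => ?_, fun x hx => ?_⟩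
    · funext i
      have hxi := hx (Pi.single i 1)
      rw [hBdef] at hxi
      simpa [Pi.single_apply, mul_ite, Finset.sum_ite_eq'] using hxi
    · funext i
      have hxi := hx (Pi.single i 1)
      rw [hBdef] at hxi
      simpa [Pi.single_apply, ite_mul, Finset.sum_ite_eq'] using hxi
  have hdim := LinearMap.BilinForm.finrank_orthogonal hnd W
  have hle : Module.finrank (ZMod 2) W ≤ Module.finrank (ZMod 2) (B.orthogonal W) :=
    Submodule.finrank_mono hWorth
  have hrank : Module.finrank (ZMod 2) W = Module.finrank (ZMod 2) V :=
    LinearMap.finrank_range_of_inj hf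
  have htot : Module.finrank (ZMod 2) (↥S → ZMod 2) = m := by
    rw [Module.finrank_fintype_fun_eq_card, Fintype.card_coe, hm]
  have hWle : Module.finrank (ZMod 2) W ≤ Module.finrank (ZMod 2) (↥S → ZMod 2) :=
    Submodule.finrank_le W
  omega
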